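/- For every four-dimensional Majorana spinor ε ∈ ℂ⁴ (i.e. conj(ε) = i(σ₁⊗I₂)ε), the vector bilinear K_A := i·ε̄·Γ_A·ε (A ∈ {+,−,1,2}) has real components, and it is a null vector with respect to the flat null metric: η^{AB}K_AK_B = 0, i.e. K₁² + K₂² = 2·K₊·K₋. -/

import Mathlib

open Matrix Complex
open scoped Kronecker

noncomputable section

/-- Pauli matrix σ₁. -/
def σ1 : Matrix (Fin 2) (Fin 2) ℂ := !![0, 1; 1, 0]
/-- Pauli matrix σ₂. -/
def σ2 : Matrix (Fin 2) (Fin 2) ℂ := !![0, -I; I, 0]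
/-- Pauli matrix σ₃. -/
def σ3 : Matrix (Fin 2) (Fin 2) ℂ := !![1, 0; 0, -1]
/-- Three-dimensional gamma matrix γ₀ = i σ₃. -/
def γ0 : Matrix (Fin 2) (Fin 2) ℂ := I • σ3
/-- σ₊ = (σ₁ + i σ₂)/√2. -/
def σp : Matrix (Fin 2) (Fin 2) ℂ := ((Real.sqrt 2 : ℂ))⁻¹ • (σ1 + I • σ2)
/-- σ₋ = (σ₁ − i σ₂)/√2. -/
def σm : Matrix (Fin 2) (Fin 2) ℂ := ((Real.sqrt 2 : ℂ))⁻¹ • (σ1 - I • σ2)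

/-- Γ⁰ = −γ₀ ⊗ σ₁. -/
def Γ0 : Matrix (Fin 2 × Fin 2) (Fin 2 × Fin 2) ℂ := -(γ0 ⊗ₖ σ1)

/-- The gamma matrices Γ₊ = γ₀⊗σ₊, Γ₋ = γ₀⊗σ₋, Γ₁ = σ₁⊗I₂, Γ₂ = σ₂⊗I₂,
indexed in the order (+, −, 1, 2). -/
def Γ : Fin 4 → Matrix (Fin 2 × Fin 2) (Fin 2 × Fin 2) ℂ :=
  ![γ0 ⊗ₖ σp, γ0 ⊗ₖ σm,
    σ1 ⊗ₖ (1 : Matrix (Fin 2) (Fin 2) ℂ), σ2 ⊗ₖ (1 : Matrix (Fin 2) (Fin 2) ℂ)]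

/-- The inverse flat null metric η^{AB} in the index order (+, −, 1, 2). -/
def ηinv : Fin 4 → Fin 4 → ℂ := fun A B =>
  !![0, -1, 0, 0; -1, 0, 0, 0; 0, 0, 1, 0; 0, 0, 0, 1] A B

/-- A four-dimensional spinor ε ∈ ℂ⁴ is Majorana if its componentwise complex
conjugate satisfies conj(ε) = i (σ₁ ⊗ I₂) ε. -/
def IsMajorana4 (ε : Fin 2 × Fin 2 → ℂ) : Prop :=
  star ε = (I • (σ1 ⊗ₖ (1 : Matrix (Fin 2) (Fin 2) ℂ))).mulVec ε

/-- The Dirac conjugate row vector ε̄ = i ε† Γ⁰. -/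
def diracConj (ε : Fin 2 × Fin 2 → ℂ) : Fin 2 × Fin 2 → ℂ :=
  I • Matrix.vecMul (star ε) Γ0

/-- The vector bilinear K_A = i ε̄ Γ_A ε. -/
def Kvec (ε : Fin 2 × Fin 2 → ℂ) : Fin 4 → ℂ :=
  fun A => I * (diracConj ε ⬝ᵥ (Γ A).mulVec ε)

set_option maxHeartbeats 2000000 in
/-- For every four-dimensional Majorana spinor ε, the vector bilinear K_A = i ε̄ Γ_A ε
has real components and is null with respect to the flat null metric:
η^{AB} K_A K_B = 0, i.e. K₁² + K₂² = 2 K₊ K₋. -/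
theorem majorana_vector_bilinear_null (ε : Fin 2 × Fin 2 → ℂ) (hε : IsMajorana4 ε) :
    (∀ A : Fin 4, (Kvec ε A).im = 0) ∧
    (∑ A : Fin 4, ∑ B : Fin 4, ηinv A B * Kvec ε A * Kvec ε B = 0) ∧
    (Kvec ε 2) ^ 2 + (Kvec ε 3) ^ 2 = 2 * Kvec ε 0 * Kvec ε 1 := by
  have h3 := congrFun hε (1,0)
  have h4 := congrFun hε (1,1)
  simp [IsMajorana4, Matrix.mulVec, dotProduct, Fintype.sum_prod_type, Fin.sum_univ_two,
    σ1, Matrix.one_apply, Prod.mk_zero_zero, Prod.mk_one_one] at h3 h4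
  have c1 : (ε (1,0)).re = -(ε 0).im := by
    have := congrArg Complex.re h3; simpa using this
  have c2 : (ε (1,0)).im = -(ε 0).re := by
    have := congrArg Complex.im h3; simp at this; linarith
  have d1 : (ε 1).re = -(ε (0,1)).im := by
    have := congrArg Complex.re h4; simpa using this
  have d2 : (ε 1).im = -(ε (0,1)).re := by
    have := congrArg Complex.im h4; simp at this; linarith
  set a := ε 0 with ha
  set b := ε (0,1) with hb
  set r : ℂ := ((Real.sqrt 2 : ℝ):ℂ)⁻¹ with hrdef
  have hK0 : Kvec ε 0 = -4*r*(b * (starRingEnd ℂ) b) := by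
    simp [Kvec, diracConj, Γ, Γ0, γ0, σ1, σ2, σ3, σp, σm, Matrix.mulVec, Matrix.vecMul,
      dotProduct, Fintype.sum_prod_type, Fin.sum_univ_two, Matrix.one_apply, hrdef, Prod.mk_zero_zero, Prod.mk_one_one]
    apply Complex.ext <;>
      simp [Complex.add_re, Complex.add_im, Complex.mul_re, Complex.mul_im, c1, c2, d1, d2] <;>
      ring
  have hK1 : Kvec ε 1 = -4*r*(a * (starRingEnd ℂ) a) := by
    simp [Kvec, diracConj, Γ, Γ0, γ0, σ1, σ2, σ3, σp, σm, Matrix.mulVec, Matrix.vecMul,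
      dotProduct, Fintype.sum_prod_type, Fin.sum_univ_two, Matrix.one_apply, hrdef, Prod.mk_zero_zero, Prod.mk_one_one]
    apply Complex.ext <;>
      simp [Complex.add_re, Complex.add_im, Complex.mul_re, Complex.mul_im, c1, c2, d1, d2] <;>
      ring
  have hK2 : Kvec ε 2 = 2*(a*b + (starRingEnd ℂ) a * (starRingEnd ℂ) b) := by
    simp [Kvec, diracConj, Γ, Γ0, γ0, σ1, σ2, σ3, σp, σm, Matrix.mulVec, Matrix.vecMul,
      dotProduct, Fintype.sum_prod_type, Fin.sum_univ_two, Matrix.one_apply, Prod.mk_zero_zero,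
        Prod.mk_one_one]
    apply Complex.ext <;>
      simp [Complex.add_re, Complex.add_im, Complex.mul_re, Complex.mul_im, c1, c2, d1, d2] <;>
      ring
  have hK3 : Kvec ε 3 = 2*I*(a*b - (starRingEnd ℂ) a * (starRingEnd ℂ) b) := by
    simp [Kvec, diracConj, Γ, Γ0, γ0, σ1, σ2, σ3, σp, σm, Matrix.mulVec, Matrix.vecMul,
      dotProduct, Fintype.sum_prod_type, Fin.sum_univ_two, Matrix.one_apply, Prod.mk_zero_zero,
        Prod.mk_one_one]
    apply Complex.ext <;>
      simp [Complex.add_re, Complex.add_im, Complex.mul_re, Complex.mul_im, c1, c2, d1, d2] <;>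
      ring
  have hr : r * r = 2⁻¹ := by
    rw [hrdef, ← mul_inv, ← Complex.ofReal_mul, Real.mul_self_sqrt (by norm_num)]
    norm_num
  have key : (Kvec ε 2) ^ 2 + (Kvec ε 3) ^ 2 = 2 * Kvec ε 0 * Kvec ε 1 := by
    rw [hK0, hK1, hK2, hK3]
    linear_combination (4*(a*b - (starRingEnd ℂ) a * (starRingEnd ℂ) b)^2) * Complex.I_sq
      - (32*(a*(starRingEnd ℂ) a*b*(starRingEnd ℂ) b)) * hr
  refine ⟨?_, ?_, key⟩
  · intro A
    fin_cases A
    · show (Kvec ε 0).im = 0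
      rw [hK0]
      simp [hrdef, Complex.inv_im, Complex.mul_im, Complex.mul_re]; ring
    · show (Kvec ε 1).im = 0
      rw [hK1]
      simp [hrdef, Complex.inv_im, Complex.mul_im, Complex.mul_re]; ring
    · show (Kvec ε 2).im = 0
      rw [hK2]
      simp [Complex.add_im, Complex.mul_im, Complex.mul_re]; ring
    · show (Kvec ε 3).im = 0
      rw [hK3]
      simp [Complex.sub_im, Complex.sub_re, Complex.mul_im, Complex.mul_re]
  · simp only [Fin.sum_univ_four, ηinv]
    norm_num [Matrix.vecHead, Matrix.vecTail, Matrix.cons_val_two, Matrix.cons_val_three]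
    linear_combination key
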